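/- arXiv:0911.3760 — 2 statements merged into one kernel-verified Lean document; each statement's English description precedes it below -/
import Mathlib

section
/- Let F be an r-sort species admitting a composition operator Η, and let Ω1, Ω2, Ω3 be pairwise componentwise-disjoint r-tuples of finite sets. Then every Η-bracketing of F[Ω1], F[Ω2], F[Ω3] equals the triple intersection η(F[Ω1⨿Ω2] × F[Ω3]) ∩ η(F[Ω1⨿Ω3] × F[Ω2]) ∩ η(F[Ω2⨿Ω3] × F[Ω1]). -/
open scoped Classical

noncomputable section

/-- Objects of `Set^r`: `r`-tuples of finite sets (realized as finite subsets of `ℕ`). -/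
abbrev Obj (r : ℕ) := Fin r → Finset ℕ

variable {r : ℕ}

/-- The `r`-tuple of empty sets. -/
def oEmpty (r : ℕ) : Obj r := fun _ => ∅

/-- Componentwise union (the disjoint union `⨿` when the arguments are
componentwise disjoint). -/
def oUnion (Ω₁ Ω₂ : Obj r) : Obj r := fun i => Ω₁ i ∪ Ω₂ i

/-- Componentwise intersection. -/
def oInter (Ω₁ Ω₂ : Obj r) : Obj r := fun i => Ω₁ i ∩ Ω₂ i

/-- Componentwise set difference. -/
def oDiff (Ω₁ Ω₂ : Obj r) : Obj r := fun i => Ω₁ i \ Ω₂ i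

/-- Componentwise disjointness. -/
def oDisj (Ω₁ Ω₂ : Obj r) : Prop := ∀ i, Disjoint (Ω₁ i) (Ω₂ i)

/-- Componentwise containment. -/
def oSub (Ω₁ Ω₂ : Obj r) : Prop := ∀ i, Ω₁ i ⊆ Ω₂ i

/-- A morphism of `Set^r`: an `r`-tuple of bijections between the components. -/
def Mor (Ω₁ Ω₂ : Obj r) : Type := ∀ i, {x // x ∈ Ω₁ i} ≃ {x // x ∈ Ω₂ i}

/-- The identity morphism. -/
def idMor (Ω : Obj r) : Mor Ω Ω := fun _ => Equiv.refl _

/-- Composition of morphisms. -/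
def compMor {Ω₁ Ω₂ Ω₃ : Obj r} (f : Mor Ω₁ Ω₂) (g : Mor Ω₂ Ω₃) : Mor Ω₁ Ω₃ :=
  fun i => (f i).trans (g i)

/-- An `r`-sort species: a (covariant) functor from `Set^r` to the category of
finite sets and bijections.  The value `F[Ω]` is the finite set `obj Ω`, and the
action on a morphism `f` is encoded by the function `map f : ℕ → ℕ` (only its
values on `obj Ω₁` are relevant). -/
structure Species (r : ℕ) where
  obj : Obj r → Finset ℕ
  map : ∀ {Ω₁ Ω₂ : Obj r}, Mor Ω₁ Ω₂ → ℕ → ℕ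
  map_mem : ∀ {Ω₁ Ω₂ : Obj r} (f : Mor Ω₁ Ω₂), ∀ x ∈ obj Ω₁, map f x ∈ obj Ω₂
  map_id : ∀ (Ω : Obj r), ∀ x ∈ obj Ω, map (idMor Ω) x = x
  map_comp : ∀ {Ω₁ Ω₂ Ω₃ : Obj r} (f : Mor Ω₁ Ω₂) (g : Mor Ω₂ Ω₃), ∀ x ∈ obj Ω₁,
    map (compMor f g) x = map g (map f x)

/-- The canonical identification of a disjoint union `s ∪ t` with the sum `s ⊕ t`. -/
def finsetSumEquiv {s t : Finset ℕ} (h : Disjoint s t) :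
    {x // x ∈ s ∪ t} ≃ {x // x ∈ s} ⊕ {x // x ∈ t} :=
  (Equiv.subtypeEquivRight (fun x => by simp)).trans
    (Equiv.Set.union (s := (↑s : Set ℕ)) (t := (↑t : Set ℕ)) (by exact_mod_cast h))

/-- The disjoint union of two bijections, as a bijection between unions. -/
def finsetUnionEquiv {s t s' t' : Finset ℕ} (h : Disjoint s t) (h' : Disjoint s' t')
    (f : {x // x ∈ s} ≃ {x // x ∈ s'}) (g : {x // x ∈ t} ≃ {x // x ∈ t'}) :
    {x // x ∈ s ∪ t} ≃ {x // x ∈ s' ∪ t'} :=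
  (finsetSumEquiv h).trans ((f.sumCongr g).trans (finsetSumEquiv h').symm)

/-- The disjoint union `f ⨿ g` of two morphisms of `Set^r`. -/
def morUnion {Ω₁ Ω₂ Ω₁' Ω₂' : Obj r} (h : oDisj Ω₁ Ω₂) (h' : oDisj Ω₁' Ω₂')
    (f : Mor Ω₁ Ω₁') (g : Mor Ω₂ Ω₂') : Mor (oUnion Ω₁ Ω₂) (oUnion Ω₁' Ω₂') :=
  fun i => finsetUnionEquiv (h i) (h' i) (f i) (g i)

/-- A composition operator `Η` for the species `F`: a natural transformation from
`F × F` (on pairs of componentwise disjoint objects) to `F ∘ ⨿` with injective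
components, satisfying Axiom (D1). -/
structure CompOp {r : ℕ} (F : Species r) where
  η : Obj r → Obj r → ℕ × ℕ → ℕ
  mem_η : ∀ {Ω₁ Ω₂ : Obj r}, oDisj Ω₁ Ω₂ → ∀ x ∈ F.obj Ω₁, ∀ y ∈ F.obj Ω₂,
    η Ω₁ Ω₂ (x, y) ∈ F.obj (oUnion Ω₁ Ω₂)
  inj_η : ∀ {Ω₁ Ω₂ : Obj r}, oDisj Ω₁ Ω₂ →
    Set.InjOn (η Ω₁ Ω₂) ((F.obj Ω₁ : Set ℕ) ×ˢ (F.obj Ω₂ : Set ℕ))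
  natural : ∀ {Ω₁ Ω₂ Ω₁' Ω₂' : Obj r} (h : oDisj Ω₁ Ω₂) (h' : oDisj Ω₁' Ω₂')
    (f : Mor Ω₁ Ω₁') (g : Mor Ω₂ Ω₂'), ∀ x ∈ F.obj Ω₁, ∀ y ∈ F.obj Ω₂,
    F.map (morUnion h h' f g) (η Ω₁ Ω₂ (x, y)) = η Ω₁' Ω₂' (F.map f x, F.map g y)
  D1 : ∀ {Ω₁ Ω₂ Ω₃ Ω₄ : Obj r}, oDisj Ω₁ Ω₂ → oDisj Ω₃ Ω₄ →
    oUnion Ω₁ Ω₂ = oUnion Ω₃ Ω₄ →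
    η Ω₁ Ω₂ '' ((F.obj Ω₁ : Set ℕ) ×ˢ (F.obj Ω₂ : Set ℕ)) ∩
      η Ω₃ Ω₄ '' ((F.obj Ω₃ : Set ℕ) ×ˢ (F.obj Ω₄ : Set ℕ)) =
    η Ω₁ Ω₂ ''
      ((η (oInter Ω₁ Ω₃) (oInter Ω₁ Ω₄) ''
          ((F.obj (oInter Ω₁ Ω₃) : Set ℕ) ×ˢ (F.obj (oInter Ω₁ Ω₄) : Set ℕ))) ×ˢ
        (η (oInter Ω₂ Ω₃) (oInter Ω₂ Ω₄) ''
          ((F.obj (oInter Ω₂ Ω₃) : Set ℕ) ×ˢ (F.obj (oInter Ω₂ Ω₄) : Set ℕ))))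

/-- The set `F_Η[Ω]` of indecomposable elements of `F[Ω]`. -/
def indec (F : Species r) (E : CompOp F) (Ω : Obj r) : Set ℕ :=
  if Ω = oEmpty r then ∅
  else (F.obj Ω : Set ℕ) \
    ⋃ (p : Obj r × Obj r) (_ : oDisj p.1 p.2) (_ : p.1 ≠ oEmpty r) (_ : p.2 ≠ oEmpty r)
      (_ : oUnion p.1 p.2 = Ω),
      E.η p.1 p.2 '' ((F.obj p.1 : Set ℕ) ×ˢ (F.obj p.2 : Set ℕ))

/-- The sets `F_Η^(k)[Ω]` of elements of `F[Ω]` consisting of exactly `k`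
indecomposable components. -/
def indecK (F : Species r) (E : CompOp F) : ℕ → Obj r → Set ℕ
  | 0 => fun Ω => if Ω = oEmpty r then (F.obj (oEmpty r) : Set ℕ) else ∅
  | (k + 1) => fun Ω => ⋃ (Ω₁ : Obj r) (_ : oSub Ω₁ Ω),
      E.η Ω₁ (oDiff Ω Ω₁) '' ((indec F E Ω₁) ×ˢ (indecK F E k (oDiff Ω Ω₁)))

/-- `Ω_I`: the componentwise disjoint union of the family `Ωs` over the index set `s`. -/
def bigU {ι : Type} [DecidableEq ι] (Ωs : ι → Obj r) (s : Finset ι) : Obj r :=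
  fun i => s.biUnion (fun j => Ωs j i)

/-- `Brack F E Ωs leaf s B` says that `B` is an `Η`-bracketing of the sets
`leaf (Ωs i)`, `i ∈ s` (each occurring exactly once).  For `leaf Ω = F[Ω]` this is an
`Η`-bracketing of the `F[Ωs i]`; for `leaf = indec F E` it is an `Η`-bracketing of
the `F_Η[Ωs i]`. -/
inductive Brack (F : Species r) (E : CompOp F) {ι : Type} [DecidableEq ι]
    (Ωs : ι → Obj r) (leaf : Obj r → Set ℕ) : Finset ι → Set ℕ → Prop
  | single (i : ι) : Brack F E Ωs leaf {i} (leaf (Ωs i))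
  | node {s t : Finset ι} {B₁ B₂ : Set ℕ} :
      Disjoint s t → s.Nonempty → t.Nonempty →
      Brack F E Ωs leaf s B₁ → Brack F E Ωs leaf t B₂ →
      Brack F E Ωs leaf (s ∪ t) (E.η (bigU Ωs s) (bigU Ωs t) '' (B₁ ×ˢ B₂))

/-- A `Λ`-weight on `(F, Η)`: Axioms (W0), (W1), (W2). -/
structure Weight {r : ℕ} (F : Species r) (E : CompOp F) (Λ : Type) [CommRing Λ]
    [Algebra ℚ Λ] where
  w : Obj r → ℕ → Λ
  W0 : ∀ x ∈ F.obj (oEmpty r), w (oEmpty r) x = 1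
  W1 : ∀ {Ω Ω' : Obj r} (f : Mor Ω Ω'), ∀ x ∈ F.obj Ω, w Ω' (F.map f x) = w Ω x
  W2 : ∀ {Ω₁ Ω₂ : Obj r}, oDisj Ω₁ Ω₂ → ∀ x ∈ indec F E Ω₁, ∀ y ∈ F.obj Ω₂,
    w (oUnion Ω₁ Ω₂) (E.η Ω₁ Ω₂ (x, y)) = w Ω₁ x * w Ω₂ y

/-- The standard object `([n₁], …, [n_r])`, with `[n] = {1, …, n}`. -/
def stdObj {r : ℕ} (n : Fin r → ℕ) : Obj r := fun i => Finset.Icc 1 (n i)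

/-- The exponential generating function
`Σ_{n₁,…,n_r ≥ 0} Σ_{x ∈ S[([n₁],…,[n_r])]} w(x) z₁^{n₁} ⋯ z_r^{n_r}/(n₁! ⋯ n_r!)`
of a subfamily `S` of a species `F`, with respect to a weight `w`. -/
def GF {r : ℕ} {Λ : Type} [CommRing Λ] [Algebra ℚ Λ] (F : Species r)
    (S : Obj r → Set ℕ) (w : Obj r → ℕ → Λ) : MvPowerSeries (Fin r) Λ :=
  fun d => (algebraMap ℚ Λ (∏ i, (1 / (Nat.factorial (d i)) : ℚ))) *
    ∑ x ∈ (F.obj (stdObj fun i => d i)).filter (fun x => x ∈ S (stdObj fun i => d i)),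
      w (stdObj fun i => d i) x

/-- The exponential `exp f = Σ_{k ≥ 0} f^k / k!` of a multivariate formal power
series `f` with zero constant term (the coefficient of a given monomial only
receives contributions from `k` at most the total degree). -/
def mvExp {σ Λ : Type} [CommRing Λ] [Algebra ℚ Λ] (f : MvPowerSeries σ Λ) :
    MvPowerSeries σ Λ :=
  fun d => ∑ k ∈ Finset.range ((d.sum fun _ m => m) + 1),
    algebraMap ℚ Λ ((1 : ℚ) / (Nat.factorial k)) * MvPowerSeries.coeff d (f ^ k)

/-- The logarithm `log f = Σ_{k ≥ 1} (-1)^{k+1} (f-1)^k / k` of a multivariate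
formal power series `f` with constant term `1`. -/
def mvLog {σ Λ : Type} [CommRing Λ] [Algebra ℚ Λ] (f : MvPowerSeries σ Λ) :
    MvPowerSeries σ Λ :=
  fun d => ∑ k ∈ Finset.Icc 1 (d.sum fun _ m => m),
    algebraMap ℚ Λ ((-1 : ℚ) ^ (k + 1) / k) * MvPowerSeries.coeff d ((f - 1) ^ k)

/-- The refined generating function `G̃F_F(z₁,…,z_r,y)`, a power series in
`z₁, …, z_r` with coefficients that are polynomials in `y` (recorded via
`Polynomial Λ`, the variable `y` being `Polynomial.X`):
`Σ_{n₁,…,n_r ≥ 0} Σ_k Σ_{x ∈ F_Η^(k)[([n₁],…,[n_r])]} y^k w(x) z₁^{n₁}⋯z_r^{n_r}/(n₁!⋯n_r!)`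
(for fixed `n₁, …, n_r` only the `k ≤ n₁ + ⋯ + n_r` contribute, since
`F_Η^(k)[Ω] = ∅ for k > ‖Ω‖`). -/
def tGF {r : ℕ} {Λ : Type} [CommRing Λ] [Algebra ℚ Λ] (F : Species r) (E : CompOp F)
    (w : Obj r → ℕ → Λ) : MvPowerSeries (Fin r) (Polynomial Λ) :=
  fun d => Polynomial.C (algebraMap ℚ Λ (∏ i, (1 / (Nat.factorial (d i)) : ℚ))) *
    ∑ k ∈ Finset.range ((∑ i, d i) + 1), Polynomial.X ^ k *
      Polynomial.C (∑ x ∈ (F.obj (stdObj fun i => d i)).filter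
          (fun x => x ∈ indecK F E k (stdObj fun i => d i)),
        w (stdObj fun i => d i) x)

/-- The species `E(F_Η)` of sets of `F_Η`-structures:  `E(F_Η)[Ω]` consists of all
finite sets `{(x₁,Ω₁),…,(x_k,Ω_k)}` with `x_i ∈ F_Η[Ω_i]`, the `Ω_i` nonempty and
pairwise componentwise disjoint, and `Ω₁ ⨿ ⋯ ⨿ Ω_k = Ω`. -/
def ESet {r : ℕ} (F : Species r) (E : CompOp F) (Ω : Obj r) :
    Set (Finset (ℕ × Obj r)) :=
  { s | (∀ p ∈ s, p.1 ∈ indec F E p.2 ∧ p.2 ≠ oEmpty r) ∧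
        (∀ p ∈ s, ∀ q ∈ s, p ≠ q → oDisj p.2 q.2) ∧
        (∀ i, Ω i = s.biUnion (fun p => p.2 i)) }

/-- The bijection between a finite set and its image under a map injective on it. -/
def imageEquiv {u : Finset ℕ} (g : ℕ → ℕ) (hg : Set.InjOn g (u : Set ℕ)) :
    {x // x ∈ u} ≃ {x // x ∈ u.image g} :=
  Equiv.ofBijective (fun x => ⟨g x, Finset.mem_image_of_mem g x.2⟩) (by
    constructor
    · rintro ⟨a, ha⟩ ⟨b, hb⟩ hab
      exact Subtype.ext (hg (by exact_mod_cast ha) (by exact_mod_cast hb)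
        (congrArg Subtype.val hab))
    · rintro ⟨y, hy⟩
      rcases Finset.mem_image.mp hy with ⟨a, ha, rfl⟩
      exact ⟨⟨a, ha⟩, rfl⟩)

/-- The underlying function `ℕ → ℕ` of the `i`-th component of a morphism. -/
def apMor {Ω Ω' : Obj r} (f : Mor Ω Ω') (i : Fin r) (a : ℕ) : ℕ :=
  if h : a ∈ Ω i then ((f i) ⟨a, h⟩ : ℕ) else a

/-- The componentwise image of a subobject `O ⊆ Ω` under a morphism `f : Ω → Ω'`. -/
def oImage {Ω Ω' : Obj r} (f : Mor Ω Ω') (O : Obj r) : Obj r :=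
  fun i => (O i).image (apMor f i)

/-- The restriction of a morphism `f : Ω → Ω'` to a subobject `O ⊆ Ω`. -/
def restrictMor {Ω Ω' : Obj r} (f : Mor Ω Ω') {O : Obj r} (hO : oSub O Ω) :
    Mor O (oImage f O) :=
  fun i => imageEquiv (apMor f i) (by
    intro a ha b hb hab
    have ha' : a ∈ Ω i := hO i (by exact_mod_cast ha)
    have hb' : b ∈ Ω i := hO i (by exact_mod_cast hb)
    have h1 : ((f i) ⟨a, ha'⟩ : ℕ) = ((f i) ⟨b, hb'⟩ : ℕ) := by
      simpa [apMor, dif_pos ha', dif_pos hb'] using hab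
    have h2 := (f i).injective (Subtype.ext h1)
    exact congrArg Subtype.val h2)

/-- The induced action of a morphism `f : Ω → Ω'` on `E(F_Η)[Ω]`. -/
def Emap {r : ℕ} (F : Species r) {Ω Ω' : Obj r} (f : Mor Ω Ω')
    (s : Finset (ℕ × Obj r)) : Finset (ℕ × Obj r) :=
  s.image (fun p =>
    if h : oSub p.2 Ω then (F.map (restrictMor f h) p.1, oImage f p.2) else p)

section Helpers

variable {r : ℕ}

lemma oDisj.symm' {A B : Obj r} (h : oDisj A B) : oDisj B A := fun i => (h i).symm

lemma oDisj_empty_right (A : Obj r) : oDisj A (oEmpty r) := fun i => by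
  simp [oEmpty]

lemma oDisj_union_left {A B C : Obj r} (h1 : oDisj A C) (h2 : oDisj B C) :
    oDisj (oUnion A B) C := fun i => by
  simpa [oUnion] using Finset.disjoint_union_left.mpr ⟨h1 i, h2 i⟩

lemma oUnion_comm (A B : Obj r) : oUnion A B = oUnion B A :=
  funext fun i => Finset.union_comm _ _

lemma oUnion_empty (A : Obj r) : oUnion A (oEmpty r) = A :=
  funext fun i => Finset.union_empty _

lemma oInter_self (A : Obj r) : oInter A A = A :=
  funext fun i => Finset.inter_self _

lemma oInter_disj {A B : Obj r} (h : oDisj A B) : oInter A B = oEmpty r :=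
  funext fun i => by
    simp [oInter, oEmpty, Finset.disjoint_iff_inter_eq_empty.mp (h i)]

/-- The image `η(F[A] × F[B])`. -/
abbrev Img (F : Species r) (E : CompOp F) (A B : Obj r) : Set ℕ :=
  E.η A B '' ((F.obj A : Set ℕ) ×ˢ (F.obj B : Set ℕ))

lemma Img_sub (F : Species r) (E : CompOp F) {A B : Obj r} (h : oDisj A B) :
    Img F E A B ⊆ (F.obj (oUnion A B) : Set ℕ) := by
  rintro y ⟨⟨x1, x2⟩, ⟨h1, h2⟩, rfl⟩
  exact E.mem_η h x1 h1 x2 h2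

/-- Axiom (D1) in a form with the four intersections pre-computed. -/
lemma D1' (F : Species r) (E : CompOp F) {A B C D P Q R S : Obj r}
    (hAB : oDisj A B) (hCD : oDisj C D) (hu : oUnion A B = oUnion C D)
    (h1 : oInter A C = P) (h2 : oInter A D = Q)
    (h3 : oInter B C = R) (h4 : oInter B D = S) :
    Img F E A B ∩ Img F E C D =
      E.η A B '' ((Img F E P Q) ×ˢ (Img F E R S)) := by
  subst h1 h2 h3 h4
  exact E.D1 hAB hCD hu

/-- Absorption: `η(F[A] × F[∅]) = F[A]` and `η(F[∅] × F[B]) = F[B]`. -/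
lemma absorb (F : Species r) (E : CompOp F) {A B : Obj r} (h : oDisj A B)
    (hA : (F.obj A).Nonempty) (hB : (F.obj B).Nonempty) :
    Img F E A (oEmpty r) = (F.obj A : Set ℕ) ∧
    Img F E (oEmpty r) B = (F.obj B : Set ℕ) := by
  have key := D1' F E h h rfl (oInter_self A) (oInter_disj h)
    (oInter_disj h.symm') (oInter_self B)
  rw [Set.inter_self] at key
  have sA : Img F E A (oEmpty r) ⊆ (F.obj A : Set ℕ) := by
    have := Img_sub F E (oDisj_empty_right A)
    rwa [oUnion_empty] at this
  have sB : Img F E (oEmpty r) B ⊆ (F.obj B : Set ℕ) := by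
    have := Img_sub F E (oDisj_empty_right B).symm'
    rwa [oUnion_comm, oUnion_empty] at this
  have hprod : (F.obj A : Set ℕ) ×ˢ (F.obj B : Set ℕ) =
      (Img F E A (oEmpty r)) ×ˢ (Img F E (oEmpty r) B) :=
    ((E.inj_η h).image_eq_image_iff subset_rfl (Set.prod_mono sA sB)).mp key
  obtain ⟨a0, ha0⟩ := hA
  obtain ⟨b0, hb0⟩ := hB
  constructor
  · refine subset_antisymm sA fun a ha => ?_
    have : (a, b0) ∈ (Img F E A (oEmpty r)) ×ˢ (Img F E (oEmpty r) B) := by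
      rw [← hprod]; exact ⟨ha, by exact_mod_cast hb0⟩
    exact this.1
  · refine subset_antisymm sB fun b hb => ?_
    have : (a0, b) ∈ (Img F E A (oEmpty r)) ×ˢ (Img F E (oEmpty r) B) := by
      rw [← hprod]; exact ⟨by exact_mod_cast ha0, hb⟩
    exact this.2

lemma etaComm_le (F : Species r) (E : CompOp F) {A B : Obj r} (h : oDisj A B)
    (hA : (F.obj A).Nonempty) (hB : (F.obj B).Nonempty) :
    Img F E A B ⊆ Img F E B A := by
  have key := D1' F E h h.symm' (oUnion_comm A B) (oInter_disj h)
    (oInter_self A) (oInter_self B) (oInter_disj h.symm')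
  rw [(absorb F E h.symm' hB hA).2, (absorb F E h.symm' hB hA).1] at key
  intro x hx
  have hx2 : x ∈ Img F E A B ∩ Img F E B A := by rw [key]; exact hx
  exact hx2.2

lemma etaComm (F : Species r) (E : CompOp F) {A B : Obj r} (h : oDisj A B)
    (hA : (F.obj A).Nonempty) (hB : (F.obj B).Nonempty) :
    Img F E A B = Img F E B A :=
  subset_antisymm (etaComm_le F E h hA hB) (etaComm_le F E h.symm' hB hA)

end Helpers
section Helpers2

variable {r : ℕ}

/-- The triple intersection. -/
def TT (F : Species r) (E : CompOp F) (X Y C : Obj r) : Set ℕ :=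
  Img F E (oUnion X Y) C ∩ Img F E (oUnion X C) Y ∩ Img F E (oUnion Y C) X

lemma TT_comm1 (F : Species r) (E : CompOp F) (X Y C : Obj r) :
    TT F E X Y C = TT F E Y X C := by
  rw [TT, TT, oUnion_comm Y X, oUnion_comm Y C]
  exact (Set.inter_right_comm _ _ _).symm

lemma TT_comm2 (F : Species r) (E : CompOp F) (X Y C : Obj r) :
    TT F E X Y C = TT F E X C Y := by
  rw [TT, TT, oUnion_comm C Y, Set.inter_comm (Img F E (oUnion X Y) C)]

/-- Two of the three intersecting sets already give the bracketing. -/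
lemma star (F : Species r) (E : CompOp F) {X Y C : Obj r}
    (hXY : oDisj X Y) (hXC : oDisj X C) (hYC : oDisj Y C)
    (hX : (F.obj X).Nonempty) (hC : (F.obj C).Nonempty) :
    Img F E (oUnion X Y) C ∩ Img F E (oUnion X C) Y =
      E.η (oUnion X Y) C '' ((Img F E X Y) ×ˢ (F.obj C : Set ℕ)) := by
  have dXY_C : oDisj (oUnion X Y) C := oDisj_union_left hXC hYC
  have dXC_Y : oDisj (oUnion X C) Y := oDisj_union_left hXY hYC.symm'
  have hu : oUnion (oUnion X Y) C = oUnion (oUnion X C) Y := by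
    funext i; ext a; simp only [oUnion, Finset.mem_union]; tauto
  have i1 : oInter (oUnion X Y) (oUnion X C) = X := by
    funext i; ext a
    have h1 : a ∈ Y i → a ∉ C i := fun hy hc => Finset.disjoint_left.mp (hYC i) hy hc
    simp only [oInter, oUnion, Finset.mem_inter, Finset.mem_union]
    tauto
  have i2 : oInter (oUnion X Y) Y = Y := by
    funext i; ext a
    simp only [oInter, oUnion, Finset.mem_inter, Finset.mem_union]
    tauto
  have i3 : oInter C (oUnion X C) = C := by
    funext i; ext a
    simp only [oInter, oUnion, Finset.mem_inter, Finset.mem_union]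
    tauto
  have i4 : oInter C Y = oEmpty r := oInter_disj hYC.symm'
  have key := D1' F E dXY_C dXC_Y hu i1 i2 i3 i4
  rwa [(absorb F E hXC.symm' hC hX).1] at key

lemma lemM (F : Species r) (E : CompOp F) {X Y C : Obj r}
    (hXY : oDisj X Y) (hXC : oDisj X C) (hYC : oDisj Y C)
    (hX : (F.obj X).Nonempty) (hY : (F.obj Y).Nonempty) (hC : (F.obj C).Nonempty) :
    E.η (oUnion X Y) C '' ((Img F E X Y) ×ˢ (F.obj C : Set ℕ)) = TT F E X Y C := by
  have s1 := star F E hXY hXC hYC hX hC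
  have s2 := star F E hXY.symm' hYC hXC hY hC
  rw [oUnion_comm Y X, etaComm F E hXY.symm' hY hX] at s2
  rw [TT, s1]
  refine (Set.inter_eq_left.mpr ?_).symm
  rw [← s2]
  exact Set.inter_subset_right

lemma lemM' (F : Species r) (E : CompOp F) {X Y C : Obj r}
    (hXY : oDisj X Y) (hXC : oDisj X C) (hYC : oDisj Y C)
    (hX : (F.obj X).Nonempty) (hY : (F.obj Y).Nonempty) (hC : (F.obj C).Nonempty) :
    E.η C (oUnion X Y) '' ((F.obj C : Set ℕ) ×ˢ (Img F E X Y)) = TT F E X Y C := by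
  have dC_XY : oDisj C (oUnion X Y) := (oDisj_union_left hXC hYC).symm'
  have dXC_Y : oDisj (oUnion X C) Y := oDisj_union_left hXY hYC.symm'
  have hXYne : (F.obj (oUnion X Y)).Nonempty := by
    obtain ⟨x, hx⟩ := hX
    obtain ⟨y, hy⟩ := hY
    exact ⟨E.η X Y (x, y), E.mem_η hXY x hx y hy⟩
  have hu : oUnion C (oUnion X Y) = oUnion (oUnion X C) Y := by
    funext i; ext a; simp only [oUnion, Finset.mem_union]; tauto
  have i1 : oInter C (oUnion X C) = C := by
    funext i; ext a
    simp only [oInter, oUnion, Finset.mem_inter, Finset.mem_union]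
    tauto
  have i2 : oInter C Y = oEmpty r := oInter_disj hYC.symm'
  have i3 : oInter (oUnion X Y) (oUnion X C) = X := by
    funext i; ext a
    have h1 : a ∈ Y i → a ∉ C i := fun hy hc => Finset.disjoint_left.mp (hYC i) hy hc
    simp only [oInter, oUnion, Finset.mem_inter, Finset.mem_union]
    tauto
  have i4 : oInter (oUnion X Y) Y = Y := by
    funext i; ext a
    simp only [oInter, oUnion, Finset.mem_inter, Finset.mem_union]
    tauto
  have key := D1' F E dC_XY dXC_Y hu i1 i2 i3 i4
  rw [(absorb F E hXC.symm' hC hX).1] at key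
  rw [etaComm F E dC_XY hC hXYne] at key
  rw [← key, star F E hXY hXC hYC hX hC, lemM F E hXY hXC hYC hX hY hC]

end Helpers2
section Helpers3

variable {r : ℕ} {ι : Type} [DecidableEq ι] {F : Species r} {E : CompOp F}
  {Ωs : ι → Obj r} {leaf : Obj r → Set ℕ}

lemma bigU_singleton (Ωs : ι → Obj r) (i : ι) : bigU Ωs {i} = Ωs i :=
  funext fun l => by simp [bigU]

lemma bigU_pair (Ωs : ι → Obj r) (i j : ι) :
    bigU Ωs {i, j} = oUnion (Ωs i) (Ωs j) :=
  funext fun l => by simp [bigU, oUnion]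

lemma brack_empty {s : Finset ι} {B : Set ℕ}
    (h : Brack F E Ωs leaf s B) {i : ι} (hi : i ∈ s)
    (hempty : leaf (Ωs i) = ∅) : B = ∅ := by
  induction h with
  | single j =>
    have : i = j := Finset.mem_singleton.mp hi
    subst this; exact hempty
  | node hst hs ht h1 h2 ih1 ih2 =>
    rcases Finset.mem_union.mp hi with h | h
    · rw [ih1 h]; simp
    · rw [ih2 h]; simp

lemma brack_one {s : Finset ι} {B : Set ℕ}
    (h : Brack F E Ωs leaf s B) (hc : s.card = 1) :
    ∃ i, s = {i} ∧ B = leaf (Ωs i) := by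
  cases h with
  | single i => exact ⟨i, rfl, rfl⟩
  | node hst hs ht h1 h2 =>
    exfalso
    rw [Finset.card_union_of_disjoint hst] at hc
    have := Finset.card_pos.mpr hs
    have := Finset.card_pos.mpr ht
    omega

lemma brack_two {s : Finset ι} {B : Set ℕ}
    (h : Brack F E Ωs leaf s B) (hc : s.card = 2) :
    ∃ i j, i ≠ j ∧ s = {i, j} ∧
      B = E.η (Ωs i) (Ωs j) '' (leaf (Ωs i) ×ˢ leaf (Ωs j)) := by
  cases h with
  | single i => simp at hc
  | @node s₁ t₁ B₁ B₂ hst hs ht h1 h2 =>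
    rw [Finset.card_union_of_disjoint hst] at hc
    have hs1 := Finset.card_pos.mpr hs
    have ht1 := Finset.card_pos.mpr ht
    obtain ⟨i, rfl, hB1⟩ := brack_one h1 (by omega)
    obtain ⟨j, rfl, hB2⟩ := brack_one h2 (by omega)
    have hij : i ≠ j := Finset.disjoint_singleton.mp hst
    refine ⟨i, j, hij, (Finset.insert_eq i {j}).symm, ?_⟩
    rw [hB1, hB2, bigU_singleton, bigU_singleton]

lemma brack_three {s : Finset ι} {B : Set ℕ}
    (h : Brack F E Ωs leaf s B) (hc : s.card = 3) :
    ∃ a b c, a ≠ b ∧ a ≠ c ∧ b ≠ c ∧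
      (B = E.η (Ωs a) (oUnion (Ωs b) (Ωs c)) ''
          (leaf (Ωs a) ×ˢ (E.η (Ωs b) (Ωs c) '' (leaf (Ωs b) ×ˢ leaf (Ωs c)))) ∨
       B = E.η (oUnion (Ωs b) (Ωs c)) (Ωs a) ''
          ((E.η (Ωs b) (Ωs c) '' (leaf (Ωs b) ×ˢ leaf (Ωs c))) ×ˢ leaf (Ωs a))) := by
  cases h with
  | single i => simp at hc
  | @node s₁ t₁ B₁ B₂ hst hs ht h1 h2 =>
    rw [Finset.card_union_of_disjoint hst] at hc
    have hs1 := Finset.card_pos.mpr hs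
    have ht1 := Finset.card_pos.mpr ht
    rcases (by omega : s₁.card = 1 ∧ t₁.card = 2 ∨ s₁.card = 2 ∧ t₁.card = 1) with
      ⟨c1, c2⟩ | ⟨c1, c2⟩
    · obtain ⟨a, rfl, hB1⟩ := brack_one h1 c1
      obtain ⟨b, c, hbc, rfl, hB2⟩ := brack_two h2 c2
      have ha : a ∉ ({b, c} : Finset ι) :=
        Finset.disjoint_left.mp hst (Finset.mem_singleton_self a)
      simp only [Finset.mem_insert, Finset.mem_singleton, not_or] at ha
      refine ⟨a, b, c, ha.1, ha.2, hbc, Or.inl ?_⟩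
      rw [hB1, hB2, bigU_singleton, bigU_pair]
    · obtain ⟨b, c, hbc, rfl, hB1⟩ := brack_two h1 c1
      obtain ⟨a, rfl, hB2⟩ := brack_one h2 c2
      have ha : a ∉ ({b, c} : Finset ι) := fun hmem =>
        Finset.disjoint_left.mp hst hmem (Finset.mem_singleton_self a)
      simp only [Finset.mem_insert, Finset.mem_singleton, not_or] at ha
      refine ⟨a, b, c, ha.1, ha.2, hbc, Or.inr ?_⟩
      rw [hB1, hB2, bigU_singleton, bigU_pair]

end Helpers3

lemma TT_perm {r : ℕ} (F : Species r) (E : CompOp F) (Ωs : Fin 3 → Obj r)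
    {a b c : Fin 3} (hab : a ≠ b) (hac : a ≠ c) (hbc : b ≠ c) :
    TT F E (Ωs a) (Ωs b) (Ωs c) = TT F E (Ωs 0) (Ωs 1) (Ωs 2) := by
  fin_cases a <;> fin_cases b <;> fin_cases c <;> simp_all <;>
    first
      | rfl
      | (rw [TT_comm2]; done)
      | (rw [TT_comm1]; done)
      | (rw [TT_comm2, TT_comm1]; done)
      | (rw [TT_comm1, TT_comm2]; done)
      | (rw [TT_comm1, TT_comm2, TT_comm1]; done)
/-- Every `Η`-bracketing of `F[Ω₁], F[Ω₂], F[Ω₃]` equals the triple intersection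
`η(F[Ω₁⨿Ω₂]×F[Ω₃]) ∩ η(F[Ω₁⨿Ω₃]×F[Ω₂]) ∩ η(F[Ω₂⨿Ω₃]×F[Ω₁])`. -/
theorem stmt3 {r : ℕ} (hr : 0 < r) (F : Species r) (E : CompOp F)
    (hF : ∃ Ω : Obj r, (F.obj Ω).Nonempty)
    (Ωs : Fin 3 → Obj r) (hd : ∀ i j, i ≠ j → oDisj (Ωs i) (Ωs j))
    (B : Set ℕ) (hB : Brack F E Ωs (fun Ω => (F.obj Ω : Set ℕ)) Finset.univ B) :
    B = E.η (oUnion (Ωs 0) (Ωs 1)) (Ωs 2) '' ((F.obj (oUnion (Ωs 0) (Ωs 1)) : Set ℕ) ×ˢ (F.obj (Ωs 2) : Set ℕ)) ∩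
        E.η (oUnion (Ωs 0) (Ωs 2)) (Ωs 1) '' ((F.obj (oUnion (Ωs 0) (Ωs 2)) : Set ℕ) ×ˢ (F.obj (Ωs 1) : Set ℕ)) ∩
        E.η (oUnion (Ωs 1) (Ωs 2)) (Ωs 0) '' ((F.obj (oUnion (Ωs 1) (Ωs 2)) : Set ℕ) ×ˢ (F.obj (Ωs 0) : Set ℕ)) := by
  show B = TT F E (Ωs 0) (Ωs 1) (Ωs 2)
  by_cases hne : ∀ i, (F.obj (Ωs i)).Nonempty
  · obtain ⟨a, b, c, hab, hac, hbc, hBeq | hBeq⟩ := brack_three hB (by simp)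
    · rw [hBeq]
      exact (lemM' F E (hd b c hbc) (hd b a (Ne.symm hab)) (hd c a (Ne.symm hac))
        (hne b) (hne c) (hne a)).trans
        (TT_perm F E Ωs hbc (Ne.symm hab) (Ne.symm hac))
    · rw [hBeq]
      exact (lemM F E (hd b c hbc) (hd b a (Ne.symm hab)) (hd c a (Ne.symm hac))
        (hne b) (hne c) (hne a)).trans
        (TT_perm F E Ωs hbc (Ne.symm hab) (Ne.symm hac))
  · push_neg at hne
    obtain ⟨i, hi⟩ := hne
    have hB0 : B = ∅ := brack_empty hB (Finset.mem_univ i) (by simp [hi])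
    have hcases : i = 0 ∨ i = 1 ∨ i = 2 := by fin_cases i <;> simp
    rw [hB0]
    rcases hcases with rfl | rfl | rfl
    · rw [TT]; simp [Img, hi]
    · rw [TT]; simp [Img, hi]
    · rw [TT]; simp [Img, hi]
end
end

section
/- (4-Permutability for (F,Η)) Let F be an r-sort species admitting a composition operator Η. If Ω1, Ω2, Ω3, Ω4 are pairwise componentwise-disjoint r-tuples of finite sets, then all Η-bracketings of F[Ω1], F[Ω2], F[Ω3], F[Ω4] are equal to each other as subsets of F[Ω1⨿Ω2⨿Ω3⨿Ω4]. -/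
open scoped Classical

noncomputable section

variable {r : ℕ}

/-! ### Auxiliary lemmas for 4-permutability -/

section Perm4Aux

lemma my_oUnion_empty_left (Ω : Obj r) : oUnion (oEmpty r) Ω = Ω :=
  funext fun i => by simp [oUnion, oEmpty]

lemma my_oUnion_empty_right (Ω : Obj r) : oUnion Ω (oEmpty r) = Ω :=
  funext fun i => by simp [oUnion, oEmpty]

lemma my_oDisj_empty_left (Ω : Obj r) : oDisj (oEmpty r) Ω :=
  fun i => by simp [oEmpty]

lemma my_oDisj_empty_right (Ω : Obj r) : oDisj Ω (oEmpty r) :=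
  fun i => by simp [oEmpty]

lemma my_oInter_self (Ω : Obj r) : oInter Ω Ω = Ω :=
  funext fun i => by simp [oInter]

lemma my_oInter_empty_left (Ω : Obj r) : oInter (oEmpty r) Ω = oEmpty r :=
  funext fun i => by simp [oInter, oEmpty]

lemma my_oInter_empty_right (Ω : Obj r) : oInter Ω (oEmpty r) = oEmpty r :=
  funext fun i => by simp [oInter, oEmpty]

lemma my_oDisj_inter_empty {Ω₁ Ω₂ : Obj r} (h : oDisj Ω₁ Ω₂) : oInter Ω₁ Ω₂ = oEmpty r :=
  funext fun i => by
    have := Finset.disjoint_iff_inter_eq_empty.mp (h i)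
    simpa [oInter, oEmpty] using this

lemma my_eta_image_subset (F : Species r) (E : CompOp F) {Ω₁ Ω₂ : Obj r} (h : oDisj Ω₁ Ω₂)
    {X Y : Set ℕ} (hX : X ⊆ ↑(F.obj Ω₁)) (hY : Y ⊆ ↑(F.obj Ω₂)) :
    E.η Ω₁ Ω₂ '' (X ×ˢ Y) ⊆ ↑(F.obj (oUnion Ω₁ Ω₂)) := by
  rintro z ⟨⟨x, y⟩, ⟨hx, hy⟩, rfl⟩
  exact Finset.mem_coe.mpr
    (E.mem_η h x (Finset.mem_coe.mp (hX hx)) y (Finset.mem_coe.mp (hY hy)))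

lemma my_image_prod_iInter {α β γ : Type*} {f : α × β → γ} {A : Set α} {B : Set β}
    (hf : Set.InjOn f (A ×ˢ B)) {κ₁ κ₂ : Type*} [Nonempty κ₁] [Nonempty κ₂]
    {X : κ₁ → Set α} {Y : κ₂ → Set β} (hX : ∀ p, X p ⊆ A) (hY : ∀ q, Y q ⊆ B) :
    f '' ((⋂ p, X p) ×ˢ (⋂ q, Y q)) = ⋂ p, ⋂ q, f '' (X p ×ˢ Y q) := by
  apply Set.Subset.antisymm
  · intro z hz
    simp only [Set.mem_iInter]
    intro p q
    exact Set.image_mono (f := f)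
      (Set.prod_mono (Set.iInter_subset X p) (Set.iInter_subset Y q)) hz
  · intro z hz
    simp only [Set.mem_iInter] at hz
    obtain ⟨p₀⟩ := ‹Nonempty κ₁›
    obtain ⟨q₀⟩ := ‹Nonempty κ₂›
    obtain ⟨⟨x, y⟩, ⟨hx₀, hy₀⟩, hfz⟩ := hz p₀ q₀
    have hxA : x ∈ A := hX p₀ hx₀
    have hyB : y ∈ B := hY q₀ hy₀
    have hx : ∀ p, x ∈ X p := by
      intro p
      obtain ⟨⟨x', y'⟩, ⟨hx', hy'⟩, hfz'⟩ := hz p q₀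
      have heq := hf (Set.mk_mem_prod (hX p hx') (hY q₀ hy'))
        (Set.mk_mem_prod hxA hyB) (hfz'.trans hfz.symm)
      have hxx : x' = x := congrArg Prod.fst heq
      exact hxx ▸ hx'
    have hy : ∀ q, y ∈ Y q := by
      intro q
      obtain ⟨⟨x', y'⟩, ⟨hx', hy'⟩, hfz'⟩ := hz p₀ q
      have heq := hf (Set.mk_mem_prod (hX p₀ hx') (hY q hy'))
        (Set.mk_mem_prod hxA hyB) (hfz'.trans hfz.symm)
      have hyy : y' = y := congrArg Prod.snd heq
      exact hyy ▸ hy'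
    exact ⟨(x, y), ⟨Set.mem_iInter.mpr hx, Set.mem_iInter.mpr hy⟩, hfz⟩

lemma my_injOn_image_cancel {α β : Type*} {f : α → β} {S X Y : Set α} (hf : Set.InjOn f S)
    (hX : X ⊆ S) (hY : Y ⊆ S) (h : f '' X = f '' Y) : X = Y :=
  (hf.image_eq_image_iff hX hY).mp h

section BigU

variable {ι : Type} [DecidableEq ι]

lemma my_bigU_empty (Ωs : ι → Obj r) : bigU Ωs ∅ = oEmpty r :=
  funext fun i => by simp [bigU, oEmpty]

lemma my_bigU_singleton (Ωs : ι → Obj r) (j : ι) : bigU Ωs {j} = Ωs j :=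
  funext fun i => by simp [bigU]

lemma my_bigU_union (Ωs : ι → Obj r) (s t : Finset ι) :
    bigU Ωs (s ∪ t) = oUnion (bigU Ωs s) (bigU Ωs t) :=
  funext fun i => by
    ext a
    simp only [bigU, oUnion, Finset.mem_biUnion, Finset.mem_union]
    constructor
    · rintro ⟨j, hj | hj, ha⟩
      · exact Or.inl ⟨j, hj, ha⟩
      · exact Or.inr ⟨j, hj, ha⟩
    · rintro (⟨j, hj, ha⟩ | ⟨j, hj, ha⟩)
      · exact ⟨j, Or.inl hj, ha⟩
      · exact ⟨j, Or.inr hj, ha⟩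

lemma my_oDisj_bigU {Ωs : ι → Obj r} (hd : ∀ i j, i ≠ j → oDisj (Ωs i) (Ωs j))
    {s t : Finset ι} (hst : Disjoint s t) : oDisj (bigU Ωs s) (bigU Ωs t) := by
  intro i
  rw [bigU, bigU, Finset.disjoint_biUnion_left]
  intro j hj
  rw [Finset.disjoint_biUnion_right]
  intro k hk
  exact hd j k (fun h => Finset.disjoint_left.mp hst hj (h ▸ hk)) i

lemma my_oInter_bigU {Ωs : ι → Obj r} (hd : ∀ i j, i ≠ j → oDisj (Ωs i) (Ωs j))
    (s t : Finset ι) : oInter (bigU Ωs s) (bigU Ωs t) = bigU Ωs (s ∩ t) := by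
  funext i
  ext a
  simp only [oInter, bigU, Finset.mem_inter, Finset.mem_biUnion]
  constructor
  · rintro ⟨⟨j, hj, haj⟩, ⟨k, hk, hak⟩⟩
    rcases eq_or_ne j k with rfl | hne
    · exact ⟨j, ⟨hj, hk⟩, haj⟩
    · exact absurd hak (Finset.disjoint_left.mp (hd j k hne i) haj)
  · rintro ⟨j, ⟨hj1, hj2⟩, haj⟩
    exact ⟨⟨j, hj1, haj⟩, ⟨j, hj2, haj⟩⟩

end BigU

/-- `F[∅]` is nonempty provided `F` is not empty everywhere. -/
lemma my_Fempty_nonempty (F : Species r) (E : CompOp F)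
    (hF : ∃ Ω : Obj r, (F.obj Ω).Nonempty) : (F.obj (oEmpty r)).Nonempty := by
  by_contra hemp
  obtain ⟨Ω, x, hx⟩ := hF
  have hemp' : F.obj (oEmpty r) = ∅ := Finset.not_nonempty_iff_eq_empty.mp hemp
  set N : ℕ := (Finset.univ.sup fun i => (Ω i).sup id) + 1 with hN
  have hinj : ∀ i : Fin r, Set.InjOn (· + N) ((Ω i : Finset ℕ) : Set ℕ) :=
    fun i a _ b _ h => Nat.add_right_cancel (h : a + N = b + N)
  let Ω' : Obj r := fun i => (Ω i).image (· + N)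
  have hdisj : oDisj Ω Ω' := by
    intro i
    rw [Finset.disjoint_left]
    intro a ha ha'
    simp only [Ω', Finset.mem_image] at ha'
    obtain ⟨b, hb, hba⟩ := ha'
    have h1 : a ≤ Finset.univ.sup fun i => (Ω i).sup id :=
      le_trans (Finset.le_sup (f := id) ha)
        (Finset.le_sup (f := fun i => (Ω i).sup id) (Finset.mem_univ i))
    omega
  let f : Mor Ω Ω' := fun i => imageEquiv (· + N) (hinj i)
  have hy : F.map f x ∈ F.obj Ω' := F.map_mem f x hx
  have hD := E.D1 hdisj hdisj rfl
  rw [my_oInter_self, my_oDisj_inter_empty hdisj,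
    my_oDisj_inter_empty (fun i => (hdisj i).symm), my_oInter_self, hemp'] at hD
  have hmem : E.η Ω Ω' (x, F.map f x) ∈
      E.η Ω Ω' '' ((F.obj Ω : Set ℕ) ×ˢ (F.obj Ω' : Set ℕ)) :=
    Set.mem_image_of_mem _ (Set.mk_mem_prod (Finset.mem_coe.mpr hx) (Finset.mem_coe.mpr hy))
  have := (Set.mem_inter hmem hmem)
  rw [hD] at this
  simp at this

/-- Left unit law: `η(F[∅] × F[Ω]) = F[Ω]`. -/
lemma my_eta_unit_left (F : Species r) (E : CompOp F) (hne : (F.obj (oEmpty r)).Nonempty)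
    (Ω : Obj r) :
    E.η (oEmpty r) Ω '' ((F.obj (oEmpty r) : Set ℕ) ×ˢ (F.obj Ω : Set ℕ)) =
      ↑(F.obj Ω) := by
  have hd0 : oDisj (oEmpty r) Ω := my_oDisj_empty_left Ω
  have hD := E.D1 hd0 hd0 rfl
  simp only [my_oInter_empty_left, my_oInter_empty_right, my_oInter_self,
    Set.inter_self] at hD
  -- hD : Img = η '' (A ×ˢ Img)
  have hA : E.η (oEmpty r) (oEmpty r) ''
      ((F.obj (oEmpty r) : Set ℕ) ×ˢ (F.obj (oEmpty r) : Set ℕ)) ⊆ ↑(F.obj (oEmpty r)) := by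
    have := my_eta_image_subset F E (my_oDisj_empty_left (oEmpty r))
      (subset_refl ((F.obj (oEmpty r) : Set ℕ))) (subset_refl _)
    rwa [my_oUnion_empty_left] at this
  have hImg : E.η (oEmpty r) Ω '' ((F.obj (oEmpty r) : Set ℕ) ×ˢ (F.obj Ω : Set ℕ)) ⊆
      ↑(F.obj Ω) := by
    have := my_eta_image_subset F E hd0 (subset_refl ((F.obj (oEmpty r) : Set ℕ)))
      (subset_refl ((F.obj Ω : Set ℕ)))
    rwa [my_oUnion_empty_left] at this
  have hXY : ((F.obj (oEmpty r) : Set ℕ) ×ˢ (F.obj Ω : Set ℕ)) =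
      (E.η (oEmpty r) (oEmpty r) ''
        ((F.obj (oEmpty r) : Set ℕ) ×ˢ (F.obj (oEmpty r) : Set ℕ))) ×ˢ
      (E.η (oEmpty r) Ω '' ((F.obj (oEmpty r) : Set ℕ) ×ˢ (F.obj Ω : Set ℕ))) :=
    my_injOn_image_cancel (E.inj_η hd0) (subset_refl _) (Set.prod_mono hA hImg) hD
  apply Set.Subset.antisymm hImg
  intro y hy
  obtain ⟨e, he⟩ := hne
  have hmem : ((e : ℕ), y) ∈ (F.obj (oEmpty r) : Set ℕ) ×ˢ (F.obj Ω : Set ℕ) :=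
    Set.mk_mem_prod (Finset.mem_coe.mpr he) hy
  rw [hXY] at hmem
  exact hmem.2

/-- Right unit law: `η(F[Ω] × F[∅]) = F[Ω]`. -/
lemma my_eta_unit_right (F : Species r) (E : CompOp F) (hne : (F.obj (oEmpty r)).Nonempty)
    (Ω : Obj r) :
    E.η Ω (oEmpty r) '' ((F.obj Ω : Set ℕ) ×ˢ (F.obj (oEmpty r) : Set ℕ)) =
      ↑(F.obj Ω) := by
  have hd0 : oDisj Ω (oEmpty r) := my_oDisj_empty_right Ω
  have hD := E.D1 hd0 hd0 rfl
  simp only [my_oInter_empty_left, my_oInter_empty_right, my_oInter_self,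
    Set.inter_self] at hD
  have hA : E.η (oEmpty r) (oEmpty r) ''
      ((F.obj (oEmpty r) : Set ℕ) ×ˢ (F.obj (oEmpty r) : Set ℕ)) ⊆ ↑(F.obj (oEmpty r)) := by
    have := my_eta_image_subset F E (my_oDisj_empty_left (oEmpty r))
      (subset_refl ((F.obj (oEmpty r) : Set ℕ))) (subset_refl _)
    rwa [my_oUnion_empty_left] at this
  have hImg : E.η Ω (oEmpty r) '' ((F.obj Ω : Set ℕ) ×ˢ (F.obj (oEmpty r) : Set ℕ)) ⊆
      ↑(F.obj Ω) := by
    have := my_eta_image_subset F E hd0 (subset_refl ((F.obj Ω : Set ℕ)))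
      (subset_refl ((F.obj (oEmpty r) : Set ℕ)))
    rwa [my_oUnion_empty_right] at this
  have hXY : ((F.obj Ω : Set ℕ) ×ˢ (F.obj (oEmpty r) : Set ℕ)) =
      (E.η Ω (oEmpty r) '' ((F.obj Ω : Set ℕ) ×ˢ (F.obj (oEmpty r) : Set ℕ))) ×ˢ
      (E.η (oEmpty r) (oEmpty r) ''
        ((F.obj (oEmpty r) : Set ℕ) ×ˢ (F.obj (oEmpty r) : Set ℕ))) :=
    my_injOn_image_cancel (E.inj_η hd0) (subset_refl _) (Set.prod_mono hImg hA) hD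
  apply Set.Subset.antisymm hImg
  intro y hy
  obtain ⟨e, he⟩ := hne
  have hmem : (y, (e : ℕ)) ∈ (F.obj Ω : Set ℕ) ×ˢ (F.obj (oEmpty r) : Set ℕ) :=
    Set.mk_mem_prod hy (Finset.mem_coe.mpr he)
  rw [hXY] at hmem
  exact hmem.1

end Perm4Aux

section Perm4Main

variable {ι : Type} [DecidableEq ι]

/-- The building blocks of the canonical set: `η(F[Ω_p] × F[Ω_{u \ p}])`. -/
def XX (F : Species r) (E : CompOp F) (Ωs : ι → Obj r) (u p : Finset ι) : Set ℕ :=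
  E.η (bigU Ωs p) (bigU Ωs (u \ p)) ''
    ((F.obj (bigU Ωs p) : Set ℕ) ×ˢ (F.obj (bigU Ωs (u \ p)) : Set ℕ))

/-- The canonical set: the intersection of `η(F[Ω_p] × F[Ω_{u \ p}])` over all `p ⊆ u`. -/
def Tset (F : Species r) (E : CompOp F) (Ωs : ι → Obj r) (u : Finset ι) : Set ℕ :=
  ⋂ p ∈ u.powerset, XX F E Ωs u p

lemma Tset_eq_iInter (F : Species r) (E : CompOp F) (Ωs : ι → Obj r) (u : Finset ι) :
    Tset F E Ωs u = ⋂ p : {p : Finset ι // p ⊆ u}, XX F E Ωs u p.1 := by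
  ext z
  simp only [Tset, Set.mem_iInter, Finset.mem_powerset, Subtype.forall]

lemma XX_subset (F : Species r) (E : CompOp F) {Ωs : ι → Obj r}
    (hd : ∀ i j, i ≠ j → oDisj (Ωs i) (Ωs j)) {u p : Finset ι} (hp : p ⊆ u) :
    XX F E Ωs u p ⊆ ↑(F.obj (bigU Ωs u)) := by
  have hdp : oDisj (bigU Ωs p) (bigU Ωs (u \ p)) := my_oDisj_bigU hd Finset.disjoint_sdiff
  have h := my_eta_image_subset F E hdp (subset_refl _) (subset_refl _)
  rwa [← my_bigU_union, Finset.union_sdiff_of_subset hp] at h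

lemma Tset_singleton (F : Species r) (E : CompOp F) (Ωs : ι → Obj r)
    (hne : (F.obj (oEmpty r)).Nonempty) (j : ι) :
    Tset F E Ωs {j} = ↑(F.obj (Ωs j)) := by
  have hg0 : XX F E Ωs {j} ∅ = ↑(F.obj (Ωs j)) := by
    rw [XX, Finset.sdiff_empty, my_bigU_empty, my_bigU_singleton]
    exact my_eta_unit_left F E hne (Ωs j)
  have hg1 : XX F E Ωs {j} {j} = ↑(F.obj (Ωs j)) := by
    rw [XX, Finset.sdiff_self, my_bigU_empty, my_bigU_singleton]
    exact my_eta_unit_right F E hne (Ωs j)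
  apply Set.Subset.antisymm
  · intro z hz
    have h := Set.mem_iInter₂.mp hz ∅ (Finset.empty_mem_powerset _)
    rwa [hg0] at h
  · intro z hz
    apply Set.mem_iInter₂.mpr
    intro p hp
    rcases Finset.subset_singleton_iff.mp (Finset.mem_powerset.mp hp) with rfl | rfl
    · rwa [hg0]
    · rwa [hg1]

lemma Tset_merge (F : Species r) (E : CompOp F) (Ωs : ι → Obj r)
    (hd : ∀ i j, i ≠ j → oDisj (Ωs i) (Ωs j)) {s t : Finset ι} (hst : Disjoint s t) :
    E.η (bigU Ωs s) (bigU Ωs t) '' (Tset F E Ωs s ×ˢ Tset F E Ωs t) =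
      Tset F E Ωs (s ∪ t) := by
  have hST : oDisj (bigU Ωs s) (bigU Ωs t) := my_oDisj_bigU hd hst
  haveI : Nonempty {p : Finset ι // p ⊆ s} := ⟨⟨∅, Finset.empty_subset s⟩⟩
  haveI : Nonempty {q : Finset ι // q ⊆ t} := ⟨⟨∅, Finset.empty_subset t⟩⟩
  rw [Tset_eq_iInter F E Ωs s, Tset_eq_iInter F E Ωs t,
    my_image_prod_iInter (E.inj_η hST)
      (fun p => XX_subset F E hd p.2) (fun q => XX_subset F E hd q.2)]
  -- pointwise identification via (D1)
  have key : ∀ p : {p : Finset ι // p ⊆ s}, ∀ q : {q : Finset ι // q ⊆ t},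
      E.η (bigU Ωs s) (bigU Ωs t) '' (XX F E Ωs s p.1 ×ˢ XX F E Ωs t q.1) =
        XX F E Ωs (s ∪ t) s ∩ XX F E Ωs (s ∪ t) (p.1 ∪ q.1) := by
    rintro ⟨p, hp⟩ ⟨q, hq⟩
    have h34 : Disjoint (p ∪ q) ((s \ p) ∪ (t \ q)) := by
      rw [Finset.disjoint_left]
      intro a ha hb
      simp only [Finset.mem_union, Finset.mem_sdiff] at ha hb
      rcases ha with h | h
      · rcases hb with ⟨_, hnp⟩ | ⟨ht', _⟩
        · exact hnp h
        · exact Finset.disjoint_left.mp hst (hp h) ht'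
      · rcases hb with ⟨hs', _⟩ | ⟨_, hnq⟩
        · exact Finset.disjoint_left.mp hst hs' (hq h)
        · exact hnq h
    have hU : s ∪ t = (p ∪ q) ∪ ((s \ p) ∪ (t \ q)) := by
      ext a
      simp only [Finset.mem_union, Finset.mem_sdiff]
      constructor
      · rintro (h | h)
        · by_cases hap : a ∈ p
          · exact Or.inl (Or.inl hap)
          · exact Or.inr (Or.inl ⟨h, hap⟩)
        · by_cases haq : a ∈ q
          · exact Or.inl (Or.inr haq)
          · exact Or.inr (Or.inr ⟨h, haq⟩)
      · rintro ((h | h) | (h | h))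
        · exact Or.inl (hp h)
        · exact Or.inr (hq h)
        · exact Or.inl h.1
        · exact Or.inr h.1
    have hD := E.D1 hST (my_oDisj_bigU hd h34) (by
      rw [← my_bigU_union, ← my_bigU_union]
      exact congrArg (bigU Ωs) hU)
    have e1 : s ∩ (p ∪ q) = p := by
      ext a
      simp only [Finset.mem_inter, Finset.mem_union]
      constructor
      · rintro ⟨ha, h | h⟩
        · exact h
        · exact absurd (hq h) (Finset.disjoint_left.mp hst ha)
      · intro h
        exact ⟨hp h, Or.inl h⟩
    have e2 : s ∩ ((s \ p) ∪ (t \ q)) = s \ p := by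
      ext a
      simp only [Finset.mem_inter, Finset.mem_union, Finset.mem_sdiff]
      constructor
      · rintro ⟨ha, h | h⟩
        · exact h
        · exact absurd h.1 (Finset.disjoint_left.mp hst ha)
      · intro h
        exact ⟨h.1, Or.inl h⟩
    have e3 : t ∩ (p ∪ q) = q := by
      ext a
      simp only [Finset.mem_inter, Finset.mem_union]
      constructor
      · rintro ⟨ha, h | h⟩
        · exact absurd (hp h) (Finset.disjoint_right.mp hst ha)
        · exact h
      · intro h
        exact ⟨hq h, Or.inr h⟩
    have e4 : t ∩ ((s \ p) ∪ (t \ q)) = t \ q := by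
      ext a
      simp only [Finset.mem_inter, Finset.mem_union, Finset.mem_sdiff]
      constructor
      · rintro ⟨ha, h | h⟩
        · exact absurd h.1 (Finset.disjoint_right.mp hst ha)
        · exact h
      · intro h
        exact ⟨h.1, Or.inr h⟩
    rw [my_oInter_bigU hd, my_oInter_bigU hd, my_oInter_bigU hd, my_oInter_bigU hd,
      e1, e2, e3, e4] at hD
    have e5 : (s ∪ t) \ (p ∪ q) = (s \ p) ∪ (t \ q) := by
      ext a
      simp only [Finset.mem_sdiff, Finset.mem_union, not_or]
      constructor
      · rintro ⟨h | h, hnp, hnq⟩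
        · exact Or.inl ⟨h, hnp⟩
        · exact Or.inr ⟨h, hnq⟩
      · rintro (⟨h, hnp⟩ | ⟨h, hnq⟩)
        · exact ⟨Or.inl h, hnp, fun hq' => Finset.disjoint_left.mp hst h (hq hq')⟩
        · exact ⟨Or.inr h, fun hp' => Finset.disjoint_left.mp hst (hp hp') h, hnq⟩
    have e6 : (s ∪ t) \ s = t := Finset.union_sdiff_cancel_left hst
    dsimp only
    simp only [XX]
    rw [e5, e6]
    exact hD.symm
  calc (⋂ p : {p : Finset ι // p ⊆ s}, ⋂ q : {q : Finset ι // q ⊆ t},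
          E.η (bigU Ωs s) (bigU Ωs t) '' (XX F E Ωs s p.1 ×ˢ XX F E Ωs t q.1))
      = ⋂ p : {p : Finset ι // p ⊆ s}, ⋂ q : {q : Finset ι // q ⊆ t},
          (XX F E Ωs (s ∪ t) s ∩ XX F E Ωs (s ∪ t) (p.1 ∪ q.1)) := by
        exact Set.iInter_congr fun p => Set.iInter_congr fun q => key p q
    _ = Tset F E Ωs (s ∪ t) := by
        ext z
        simp only [Set.mem_iInter, Set.mem_inter_iff, Subtype.forall, Tset,
          Finset.mem_powerset]
        constructor
        · intro h w hw
          by_cases hws : w = s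
          · rw [hws]
            exact (h ∅ (Finset.empty_subset _) ∅ (Finset.empty_subset _)).1
          · have hp : w ∩ s ⊆ s := Finset.inter_subset_right
            have hq : w ∩ t ⊆ t := Finset.inter_subset_right
            have hw' : (w ∩ s) ∪ (w ∩ t) = w := by
              rw [← Finset.inter_union_distrib_left]
              exact Finset.inter_eq_left.mpr hw
            have := (h (w ∩ s) hp (w ∩ t) hq).2
            rwa [hw'] at this
        · intro h p hp q hq
          refine ⟨h s Finset.subset_union_left, h (p ∪ q) ?_⟩
          exact Finset.union_subset (hp.trans Finset.subset_union_left)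
            (hq.trans Finset.subset_union_right)

lemma brack_eq_Tset (F : Species r) (E : CompOp F) {Ωs : ι → Obj r}
    (hd : ∀ i j, i ≠ j → oDisj (Ωs i) (Ωs j)) (hne : (F.obj (oEmpty r)).Nonempty)
    {s : Finset ι} {B : Set ℕ}
    (hB : Brack F E Ωs (fun Ω => (F.obj Ω : Set ℕ)) s B) : B = Tset F E Ωs s := by
  induction hB with
  | single i => exact (Tset_singleton F E Ωs hne i).symm
  | node hdisj hs ht h1 h2 ih1 ih2 =>
    rw [ih1, ih2, Tset_merge F E Ωs hd hdisj]

end Perm4Main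

/-- 4-Permutability for `(F, Η)`: all `Η`-bracketings of
`F[Ω₁], F[Ω₂], F[Ω₃], F[Ω₄]` are equal to each other. -/
theorem stmt4 {r : ℕ} (hr : 0 < r) (F : Species r) (E : CompOp F)
    (hF : ∃ Ω : Obj r, (F.obj Ω).Nonempty)
    (Ωs : Fin 4 → Obj r) (hd : ∀ i j, i ≠ j → oDisj (Ωs i) (Ωs j))
    (B₁ B₂ : Set ℕ)
    (hB₁ : Brack F E Ωs (fun Ω => (F.obj Ω : Set ℕ)) Finset.univ B₁)
    (hB₂ : Brack F E Ωs (fun Ω => (F.obj Ω : Set ℕ)) Finset.univ B₂) :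
    B₁ = B₂ := by
  have hne := my_Fempty_nonempty F E hF
  rw [brack_eq_Tset F E hd hne hB₁, brack_eq_Tset F E hd hne hB₂]

end
end
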